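/- Let A, B ∈ ℍ² with D = d(A,B), let u ∈ T_A ℍ² and v ∈ T_B ℍ², set A_t = exp_A(t u), B_t = exp_B(t v), and F(t) = cosh(d(A_t, B_t)) − 1. Let α (resp. β) be the oriented angle between the geodesic from A to B and the vector u (resp. v). Then F'(0) = −sinh(D)(‖u‖ cos α − ‖v‖ cos β) and F''(0) = cosh(D)(‖u‖² + ‖v‖² − 2‖u‖‖v‖ cos α cos β) − 2‖u‖‖v‖ sin α sin β. -/

import Mathlib

noncomputable section

/-- The Minkowski bilinear form on `ℝ^{n,1}`. -/
def mink (n : ℕ) (x y : Fin (n+1) → ℝ) : ℝ :=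
  (∑ i : Fin n, x i.castSucc * y i.castSucc) - x (Fin.last n) * y (Fin.last n)

/-- Membership in the hyperboloid model of hyperbolic `n`-space. -/
def IsHyp (n : ℕ) (x : Fin (n+1) → ℝ) : Prop :=
  mink n x x = -1 ∧ 0 < x (Fin.last n)

/-- Tangency to the hyperboloid at `x`. -/
def IsTang (n : ℕ) (x v : Fin (n+1) → ℝ) : Prop := mink n x v = 0

/-- Inverse hyperbolic cosine. -/
def acosh (x : ℝ) : ℝ := Real.log (x + Real.sqrt (x ^ 2 - 1))

/-- Hyperbolic distance in the hyperboloid model: `cosh (dist x y) = -⟨x,y⟩`. -/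
def hdist (n : ℕ) (x y : Fin (n+1) → ℝ) : ℝ := acosh (-(mink n x y))

/-- Norm of a tangent vector (the Minkowski form is positive definite on tangent spaces). -/
def tnorm (n : ℕ) (v : Fin (n+1) → ℝ) : ℝ := Real.sqrt (mink n v v)

/-- The Riemannian exponential map of the hyperboloid. -/
def hexp (n : ℕ) (x v : Fin (n+1) → ℝ) : Fin (n+1) → ℝ :=
  Real.cosh (tnorm n v) • x + (Real.sinh (tnorm n v) / tnorm n v) • v

/-- Unit tangent vector at `x` pointing towards `y`. -/
def hdir (n : ℕ) (x y : Fin (n+1) → ℝ) : Fin (n+1) → ℝ :=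
  (Real.sinh (hdist n x y))⁻¹ • (y + (mink n x y) • x)

/-- The inverse exponential map `exp_x⁻¹ (y)`. -/
def hlog (n : ℕ) (x y : Fin (n+1) → ℝ) : Fin (n+1) → ℝ :=
  hdist n x y • hdir n x y

/-- Parallel transport from `T_y ℍⁿ` to `T_x ℍⁿ` along the geodesic from `y` to `x`. -/
def ptrans (n : ℕ) (x y v : Fin (n+1) → ℝ) : Fin (n+1) → ℝ :=
  v + ((mink n x v) / (1 - mink n x y)) • (x + y)

/-- Minkowski volume form on `ℝ^{2,1}`; `det3 x u w = ‖u‖‖w‖ sin θ` for tangent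
vectors `u, w` at `x ∈ ℍ²`, where `θ` is the oriented angle from `u` to `w`. -/
def det3 (a b c : Fin 3 → ℝ) : ℝ :=
  a 0 * (b 1 * c 2 - b 2 * c 1) - a 1 * (b 0 * c 2 - b 2 * c 0)
    + a 2 * (b 0 * c 1 - b 1 * c 0)

/-- `sinhc x = sinh x / x`, with `sinhc 0 = 1`. -/
def sinhc (x : ℝ) : ℝ := if x = 0 then 1 else Real.sinh x / x

/-! ### Auxiliary lemmas -/

lemma mink2 (x y : Fin 3 → ℝ) : mink 2 x y = x 0 * y 0 + x 1 * y 1 - x 2 * y 2 := by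
  simp [mink, Fin.sum_univ_two, show Fin.last 2 = 2 from rfl]

lemma posdef_key (A w : Fin 3 → ℝ) (hA : mink 2 A A = -1)
    (hw : mink 2 A w = 0) :
    mink 2 w w * (A 2)^2 = (w 0)^2 + (w 1)^2 + (w 0 * A 1 - w 1 * A 0)^2 := by
  rw [mink2] at *
  linear_combination (-(w 0)^2 - (w 1)^2) * hA + (w 2 * A 2 + w 0 * A 0 + w 1 * A 1) * hw

lemma posdef_nonneg (A w : Fin 3 → ℝ) (hA : mink 2 A A = -1) (hA2 : 0 < A 2)
    (hw : mink 2 A w = 0) : 0 ≤ mink 2 w w := by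
  have h := posdef_key A w hA hw
  nlinarith [sq_nonneg (w 0), sq_nonneg (w 1), sq_nonneg (w 0 * A 1 - w 1 * A 0), pow_pos hA2 2]

lemma posdef_zero (A w : Fin 3 → ℝ) (hA : mink 2 A A = -1) (hA2 : 0 < A 2)
    (hw : mink 2 A w = 0) (h0 : mink 2 w w = 0) : w = 0 := by
  have h := posdef_key A w hA hw
  rw [h0] at h
  have h1 : w 0 = 0 := by nlinarith [sq_nonneg (w 1), sq_nonneg (w 0 * A 1 - w 1 * A 0)]
  have h2 : w 1 = 0 := by nlinarith [sq_nonneg (w 0), sq_nonneg (w 0 * A 1 - w 1 * A 0)]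
  have h3 : w 2 = 0 := by
    rw [mink2, h1, h2] at h0; nlinarith
  funext i
  fin_cases i <;> simp [h1, h2, h3]

lemma c_ge_one (A B : Fin 3 → ℝ) (hA : mink 2 A A = -1) (hA2 : 0 < A 2)
    (hB : mink 2 B B = -1) (hB2 : 0 < B 2) : 1 ≤ -(mink 2 A B) := by
  rw [mink2] at *
  nlinarith [sq_nonneg (A 0 - B 0), sq_nonneg (A 1 - B 1), sq_nonneg (A 0 * B 1 - A 1 * B 0),
    sq_nonneg (A 2 - B 2), mul_pos hA2 hB2, sq_nonneg (A 2 * B 2 - 1),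
    sq_nonneg (A 0 * B 0 + A 1 * B 1 + 1 + A 2 * B 2)]

lemma c_gt_one (A B : Fin 3 → ℝ) (hA : mink 2 A A = -1) (hA2 : 0 < A 2)
    (hB : mink 2 B B = -1) (hB2 : 0 < B 2) (hne : A ≠ B) : 1 < -(mink 2 A B) := by
  rcases lt_or_eq_of_le (c_ge_one A B hA hA2 hB hB2) with h | h
  · exact h
  · exfalso
    apply hne
    have hd : A - B = 0 := by
      apply posdef_zero A (A - B) hA hA2
      · rw [mink2] at *; simp only [Pi.sub_apply]; nlinarith [h]
      · rw [mink2] at *; simp only [Pi.sub_apply]; nlinarith [h]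
    exact sub_eq_zero.mp hd

lemma acosh_inv_aux {x : ℝ} (hx : 1 ≤ x) :
    (x + Real.sqrt (x ^ 2 - 1))⁻¹ = x - Real.sqrt (x ^ 2 - 1) := by
  have h0 : (0:ℝ) ≤ x ^ 2 - 1 := by nlinarith
  have hs := Real.sq_sqrt h0
  have hsn := Real.sqrt_nonneg (x ^ 2 - 1)
  have hy : 0 < x + Real.sqrt (x ^ 2 - 1) := by linarith
  rw [inv_eq_iff_eq_inv, eq_comm, inv_eq_iff_eq_inv]
  field_simp
  nlinarith

lemma cosh_acosh {x : ℝ} (hx : 1 ≤ x) : Real.cosh (acosh x) = x := by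
  have h0 : (0:ℝ) ≤ x ^ 2 - 1 := by nlinarith
  have hsn := Real.sqrt_nonneg (x ^ 2 - 1)
  have hy : 0 < x + Real.sqrt (x ^ 2 - 1) := by linarith
  rw [acosh, Real.cosh_eq, Real.exp_log hy, Real.exp_neg, Real.exp_log hy,
    acosh_inv_aux hx]
  ring

lemma sinh_acosh {x : ℝ} (hx : 1 ≤ x) : Real.sinh (acosh x) = Real.sqrt (x ^ 2 - 1) := by
  have h0 : (0:ℝ) ≤ x ^ 2 - 1 := by nlinarith
  have hsn := Real.sqrt_nonneg (x ^ 2 - 1)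
  have hy : 0 < x + Real.sqrt (x ^ 2 - 1) := by linarith
  rw [acosh, Real.sinh_eq, Real.exp_log hy, Real.exp_neg, Real.exp_log hy,
    acosh_inv_aux hx]
  ring

lemma hexp_coord (A u : Fin 3 → ℝ) (hnn : 0 ≤ mink 2 u u)
    (hz : tnorm 2 u = 0 → u = 0) (t : ℝ) :
    hexp 2 A (t • u) = fun i =>
      Real.cosh (t * tnorm 2 u) * A i
        + (Real.sinh (t * tnorm 2 u) / tnorm 2 u) * u i := by
  set a := tnorm 2 u with ha
  have ha0 : 0 ≤ a := Real.sqrt_nonneg _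
  have ha2 : a ^ 2 = mink 2 u u := Real.sq_sqrt hnn
  have hmt : mink 2 (t • u) (t • u) = (|t| * a) ^ 2 := by
    rw [mink2] at *
    simp only [Pi.smul_apply, smul_eq_mul]
    rw [mul_pow, sq_abs]
    nlinarith [ha2]
  have htn : tnorm 2 (t • u) = |t| * a := by
    rw [tnorm, hmt, Real.sqrt_sq (by positivity)]
  have habs : |t| * a = |t * a| := by
    rw [abs_mul, abs_of_nonneg ha0]
  funext i
  simp only [hexp, htn, Pi.add_apply, Pi.smul_apply, smul_eq_mul]
  rw [habs, Real.cosh_abs]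
  congr 1
  rcases eq_or_ne a 0 with h | h
  · have hu := hz h
    simp [hu]
  rcases eq_or_ne t 0 with ht | ht
  · simp [ht]
  rcases abs_cases (t * a) with ⟨he, _⟩ | ⟨he, _⟩
  · rw [he]; field_simp
  · rw [he, Real.sinh_neg]
    rw [neg_div_neg_eq]
    field_simp

lemma hasDeriv4 (a b kcc kcs ksc kss : ℝ) (t : ℝ) :
    HasDerivAt (fun t => kcc * (Real.cosh (t*a) * Real.cosh (t*b))
        + kcs * (Real.cosh (t*a) * Real.sinh (t*b))
        + ksc * (Real.sinh (t*a) * Real.cosh (t*b))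
        + kss * (Real.sinh (t*a) * Real.sinh (t*b)))
      ((kcs*b + ksc*a) * (Real.cosh (t*a) * Real.cosh (t*b))
        + (kcc*b + kss*a) * (Real.cosh (t*a) * Real.sinh (t*b))
        + (kcc*a + kss*b) * (Real.sinh (t*a) * Real.cosh (t*b))
        + (kcs*a + ksc*b) * (Real.sinh (t*a) * Real.sinh (t*b))) t := by
  have hca : HasDerivAt (fun t : ℝ => Real.cosh (t*a)) (Real.sinh (t*a) * a) t :=
    by simpa using ((hasDerivAt_id t).mul_const a).cosh
  have hcb : HasDerivAt (fun t : ℝ => Real.cosh (t*b)) (Real.sinh (t*b) * b) t :=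
    by simpa using ((hasDerivAt_id t).mul_const b).cosh
  have hsa : HasDerivAt (fun t : ℝ => Real.sinh (t*a)) (Real.cosh (t*a) * a) t :=
    by simpa using ((hasDerivAt_id t).mul_const a).sinh
  have hsb : HasDerivAt (fun t : ℝ => Real.sinh (t*b)) (Real.cosh (t*b) * b) t :=
    by simpa using ((hasDerivAt_id t).mul_const b).sinh
  have H := (((hca.mul hcb).const_mul kcc).add ((hca.mul hsb).const_mul kcs)).add
      (((hsa.mul hcb).const_mul ksc).add ((hsa.mul hsb).const_mul kss))
  convert H using 1
  · rfl
  · rfl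
  · funext s; simp only [Pi.add_apply, Pi.mul_apply]; ring
  · ring

lemma gderivs (a b kcc kcs ksc kss : ℝ) :
    deriv (fun t : ℝ => (kcc * (Real.cosh (t*a) * Real.cosh (t*b))
        + kcs * (Real.cosh (t*a) * Real.sinh (t*b))
        + ksc * (Real.sinh (t*a) * Real.cosh (t*b))
        + kss * (Real.sinh (t*a) * Real.sinh (t*b))) - 1) 0 = kcs*b + ksc*a
    ∧ deriv (deriv (fun t : ℝ => (kcc * (Real.cosh (t*a) * Real.cosh (t*b))
        + kcs * (Real.cosh (t*a) * Real.sinh (t*b))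
        + ksc * (Real.sinh (t*a) * Real.cosh (t*b))
        + kss * (Real.sinh (t*a) * Real.sinh (t*b))) - 1)) 0
      = (kcc*b + kss*a)*b + (kcc*a + kss*b)*a := by
  have hG : ∀ t : ℝ, HasDerivAt (fun t : ℝ => (kcc * (Real.cosh (t*a) * Real.cosh (t*b))
        + kcs * (Real.cosh (t*a) * Real.sinh (t*b))
        + ksc * (Real.sinh (t*a) * Real.cosh (t*b))
        + kss * (Real.sinh (t*a) * Real.sinh (t*b))) - 1)
      ((kcs*b + ksc*a) * (Real.cosh (t*a) * Real.cosh (t*b))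
        + (kcc*b + kss*a) * (Real.cosh (t*a) * Real.sinh (t*b))
        + (kcc*a + kss*b) * (Real.sinh (t*a) * Real.cosh (t*b))
        + (kcs*a + ksc*b) * (Real.sinh (t*a) * Real.sinh (t*b))) t :=
    fun t => (hasDeriv4 a b kcc kcs ksc kss t).sub_const 1
  have hd1 : deriv (fun t : ℝ => (kcc * (Real.cosh (t*a) * Real.cosh (t*b))
        + kcs * (Real.cosh (t*a) * Real.sinh (t*b))
        + ksc * (Real.sinh (t*a) * Real.cosh (t*b))
        + kss * (Real.sinh (t*a) * Real.sinh (t*b))) - 1)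
      = fun t => ((kcs*b + ksc*a) * (Real.cosh (t*a) * Real.cosh (t*b))
        + (kcc*b + kss*a) * (Real.cosh (t*a) * Real.sinh (t*b))
        + (kcc*a + kss*b) * (Real.sinh (t*a) * Real.cosh (t*b))
        + (kcs*a + ksc*b) * (Real.sinh (t*a) * Real.sinh (t*b))) :=
    funext fun t => (hG t).deriv
  constructor
  · rw [hd1]
    norm_num
  · rw [hd1]
    have h2 := hasDeriv4 a b (kcs*b + ksc*a) (kcc*b + kss*a) (kcc*a + kss*b) (kcs*a + ksc*b) 0
    rw [h2.deriv]
    norm_num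

lemma transfer (A B u v : Fin 3 → ℝ) (a b kcc kcs ksc kss : ℝ)
    (hmg : ∀ t : ℝ, -(mink 2 (hexp 2 A (t • u)) (hexp 2 B (t • v)))
      = kcc * (Real.cosh (t*a) * Real.cosh (t*b))
        + kcs * (Real.cosh (t*a) * Real.sinh (t*b))
        + ksc * (Real.sinh (t*a) * Real.cosh (t*b))
        + kss * (Real.sinh (t*a) * Real.sinh (t*b)))
    (hk : 1 < kcc) :
    deriv (fun t : ℝ =>
        Real.cosh (hdist 2 (hexp 2 A (t • u)) (hexp 2 B (t • v))) - 1) 0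
      = kcs*b + ksc*a
    ∧ deriv (deriv (fun t : ℝ =>
        Real.cosh (hdist 2 (hexp 2 A (t • u)) (hexp 2 B (t • v))) - 1)) 0
      = (kcc*b + kss*a)*b + (kcc*a + kss*b)*a := by
  have hGcont : Continuous (fun t : ℝ => kcc * (Real.cosh (t*a) * Real.cosh (t*b))
        + kcs * (Real.cosh (t*a) * Real.sinh (t*b))
        + ksc * (Real.sinh (t*a) * Real.cosh (t*b))
        + kss * (Real.sinh (t*a) * Real.sinh (t*b))) := by
    fun_prop
  have hG0 : 1 < kcc * (Real.cosh ((0:ℝ)*a) * Real.cosh ((0:ℝ)*b))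
        + kcs * (Real.cosh ((0:ℝ)*a) * Real.sinh ((0:ℝ)*b))
        + ksc * (Real.sinh ((0:ℝ)*a) * Real.cosh ((0:ℝ)*b))
        + kss * (Real.sinh ((0:ℝ)*a) * Real.sinh ((0:ℝ)*b)) := by
    norm_num
    exact hk
  have hev : ∀ᶠ t in nhds (0:ℝ), 1 < kcc * (Real.cosh (t*a) * Real.cosh (t*b))
        + kcs * (Real.cosh (t*a) * Real.sinh (t*b))
        + ksc * (Real.sinh (t*a) * Real.cosh (t*b))
        + kss * (Real.sinh (t*a) * Real.sinh (t*b)) :=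
    hGcont.continuousAt.eventually (eventually_gt_nhds hG0)
  have hFev : (fun t : ℝ =>
        Real.cosh (hdist 2 (hexp 2 A (t • u)) (hexp 2 B (t • v))) - 1)
      =ᶠ[nhds (0:ℝ)] (fun t => (kcc * (Real.cosh (t*a) * Real.cosh (t*b))
        + kcs * (Real.cosh (t*a) * Real.sinh (t*b))
        + ksc * (Real.sinh (t*a) * Real.cosh (t*b))
        + kss * (Real.sinh (t*a) * Real.sinh (t*b))) - 1) := by
    filter_upwards [hev] with t ht
    have h1 : hdist 2 (hexp 2 A (t • u)) (hexp 2 B (t • v))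
        = acosh (kcc * (Real.cosh (t*a) * Real.cosh (t*b))
        + kcs * (Real.cosh (t*a) * Real.sinh (t*b))
        + ksc * (Real.sinh (t*a) * Real.cosh (t*b))
        + kss * (Real.sinh (t*a) * Real.sinh (t*b))) := by
      rw [hdist, hmg t]
    rw [h1, cosh_acosh ht.le]
  obtain ⟨d1, d2⟩ := gderivs a b kcc kcs ksc kss
  exact ⟨hFev.deriv_eq.trans d1, hFev.deriv.deriv_eq.trans d2⟩

lemma gram_aux (x y u v : Fin 3 → ℝ) :
    det3 x y u * det3 x y v
      = -(mink 2 x x * (mink 2 y y * mink 2 u v - mink 2 y v * mink 2 u y)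
          - mink 2 x y * (mink 2 y x * mink 2 u v - mink 2 y v * mink 2 u x)
          + mink 2 x v * (mink 2 y x * mink 2 u y - mink 2 y y * mink 2 u x)) := by
  simp only [det3, mink2]
  ring

lemma mink_symm (x y : Fin 3 → ℝ) : mink 2 x y = mink 2 y x := by
  rw [mink2, mink2]; ring


/-- first and second derivatives of `F(t) = cosh d(A_t, B_t) - 1`.
`α` is the oriented angle at `A` between the geodesic from `A` to `B` and `u`; `β` is the
oriented angle at `B` between the (continuation of the) geodesic `AB` and `v`. -/
theorem stmt2 (A B u v : Fin 3 → ℝ)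
    (hA : IsHyp 2 A) (hB : IsHyp 2 B) (hAB : A ≠ B)
    (hu : IsTang 2 A u) (hv : IsTang 2 B v)
    (α β : ℝ)
    (hαc : tnorm 2 u * Real.cos α = mink 2 (hdir 2 A B) u)
    (hαs : tnorm 2 u * Real.sin α = det3 A (hdir 2 A B) u)
    (hβc : tnorm 2 v * Real.cos β = -(mink 2 (hdir 2 B A) v))
    (hβs : tnorm 2 v * Real.sin β = -(det3 B (hdir 2 B A) v)) :
    deriv (fun t : ℝ =>
        Real.cosh (hdist 2 (hexp 2 A (t • u)) (hexp 2 B (t • v))) - 1) 0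
      = -(Real.sinh (hdist 2 A B))
          * (tnorm 2 u * Real.cos α - tnorm 2 v * Real.cos β)
    ∧ deriv (deriv (fun t : ℝ =>
        Real.cosh (hdist 2 (hexp 2 A (t • u)) (hexp 2 B (t • v))) - 1)) 0
      = Real.cosh (hdist 2 A B) * ((tnorm 2 u) ^ 2 + (tnorm 2 v) ^ 2
            - 2 * tnorm 2 u * tnorm 2 v * Real.cos α * Real.cos β)
        - 2 * tnorm 2 u * tnorm 2 v * Real.sin α * Real.sin β := by
  
  obtain ⟨hAm, hA2⟩ := hA
  obtain ⟨hBm, hB2⟩ := hB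
  have hA2' : 0 < A 2 := hA2
  have hB2' : 0 < B 2 := hB2
  have hu' : mink 2 A u = 0 := hu
  have hv' : mink 2 B v = 0 := hv
  have hun : 0 ≤ mink 2 u u := posdef_nonneg A u hAm hA2' hu'
  have hvn : 0 ≤ mink 2 v v := posdef_nonneg B v hBm hB2' hv'
  have huz : tnorm 2 u = 0 → u = 0 := by
    intro h
    exact posdef_zero A u hAm hA2' hu' ((Real.sqrt_eq_zero hun).mp h)
  have hvz : tnorm 2 v = 0 → v = 0 := by
    intro h
    exact posdef_zero B v hBm hB2' hv' ((Real.sqrt_eq_zero hvn).mp h)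
  have hc1 : 1 < -(mink 2 A B) := c_gt_one A B hAm hA2' hBm hB2' hAB
  set a := tnorm 2 u with hadef
  set b := tnorm 2 v with hbdef
  set m := mink 2 A B with hmdef
  set P := mink 2 u B with hPdef
  set Q := mink 2 A v with hQdef
  set R := mink 2 u v with hRdef
  set s := Real.sqrt (m ^ 2 - 1) with hsdef
  have hs2 : s ^ 2 = m ^ 2 - 1 := Real.sq_sqrt (by nlinarith)
  have hspos : 0 < s := Real.sqrt_pos.mpr (by nlinarith)
  have hsne : s ≠ 0 := ne_of_gt hspos
  have hdAB : hdist 2 A B = acosh (-m) := rfl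
  have hsemdist : Real.sinh (hdist 2 A B) = s := by
    rw [hdAB, sinh_acosh hc1.le, hsdef]
    norm_num
  have hcoshAB : Real.cosh (hdist 2 A B) = -m := by
    rw [hdAB, cosh_acosh hc1.le]
  have hdBA : hdist 2 B A = hdist 2 A B := by
    rw [hdist, hdist, mink_symm B A]
  have hsinhBA : Real.sinh (hdist 2 B A) = s := by rw [hdBA, hsemdist]
  have hmg : ∀ t : ℝ, -(mink 2 (hexp 2 A (t • u)) (hexp 2 B (t • v)))
      = (-m) * (Real.cosh (t*a) * Real.cosh (t*b))
        + (-(Q / b)) * (Real.cosh (t*a) * Real.sinh (t*b))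
        + (-(P / a)) * (Real.sinh (t*a) * Real.cosh (t*b))
        + (-(R / (a*b))) * (Real.sinh (t*a) * Real.sinh (t*b)) := by
    intro t
    rw [hexp_coord A u hun huz t, hexp_coord B v hvn hvz t]
    rw [hmdef, hQdef, hPdef, hRdef, hadef, hbdef]
    simp only [mink2]
    ring
  obtain ⟨d1, d2⟩ := transfer A B u v a b (-m) (-(Q / b)) (-(P / a)) (-(R / (a*b))) hmg hc1
  have hdirABu : mink 2 (hdir 2 A B) u = P / s := by
    rw [hdir, hsemdist, hPdef]
    have hu2 := hu'
    rw [mink2] at hu2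
    simp only [mink2, Pi.smul_apply, Pi.add_apply, smul_eq_mul]
    linear_combination ((A 0 * B 0 + A 1 * B 1 - A 2 * B 2) * s⁻¹) * hu2
  have hdirBAv : mink 2 (hdir 2 B A) v = Q / s := by
    rw [hdir, hsinhBA, hQdef]
    have hv2 := hv'
    rw [mink2] at hv2
    simp only [mink2, Pi.smul_apply, Pi.add_apply, smul_eq_mul]
    linear_combination ((B 0 * A 0 + B 1 * A 1 - B 2 * A 2) * s⁻¹) * hv2
  have hdetABu : det3 A (hdir 2 A B) u = det3 A B u / s := by
    rw [hdir, hsemdist]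
    simp only [det3, mink2, Pi.smul_apply, Pi.add_apply, smul_eq_mul]
    ring
  have hdetBAv : det3 B (hdir 2 B A) v = -(det3 A B v / s) := by
    rw [hdir, hsinhBA]
    simp only [det3, mink2, Pi.smul_apply, Pi.add_apply, smul_eq_mul]
    ring
  have hPa : P / a * a = P := by
    rcases eq_or_ne a 0 with h | h
    · have h0 := huz h
      rw [hPdef, h0, h, mink2]
      norm_num
    · exact div_mul_cancel₀ P h
  have hQb : Q / b * b = Q := by
    rcases eq_or_ne b 0 with h | h
    · have h0 := hvz h
      rw [hQdef, h0, h, mink2]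
      norm_num
    · exact div_mul_cancel₀ Q h
  have hRab : R / (a*b) * (a*b) = R := by
    rcases eq_or_ne a 0 with h | h
    · have h0 := huz h
      rw [hRdef, h0, h, mink2]
      norm_num
    · rcases eq_or_ne b 0 with h' | h'
      · have h0 := hvz h'
        rw [hRdef, h0, h', mink2]
        norm_num
      · exact div_mul_cancel₀ R (mul_ne_zero h h')
  have hsP : s * (P / s) = P := mul_div_cancel₀ P hsne
  have hsQ : s * (Q / s) = Q := mul_div_cancel₀ Q hsne
  have hGram : det3 A B u * det3 A B v = (m^2 - 1) * R + (-m) * P * Q := by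
    have h := gram_aux A B u v
    have huA : mink 2 u A = 0 := by rw [mink_symm u A]; exact hu'
    have hBA : mink 2 B A = m := by rw [mink_symm B A]
    rw [hAm, hBm, hv', huA, hBA, ← hmdef, ← hQdef, ← hRdef, ← hPdef] at h
    linear_combination h
  constructor
  · rw [d1, hsemdist, hαc, hβc, hdirABu, hdirBAv]
    linear_combination (-1 : ℝ) * hQb + (-1 : ℝ) * hPa + hsP + hsQ
  · rw [d2, hcoshAB]
    have e1 : a * Real.cos α = P / s := by rw [hαc, hdirABu]
    have e2 : b * Real.cos β = -(Q / s) := by rw [hβc, hdirBAv]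
    have e3 : a * Real.sin α = det3 A B u / s := by rw [hαs, hdetABu]
    have e4 : b * Real.sin β = det3 A B v / s := by
      rw [hβs, hdetBAv]
      ring
    linear_combination (-2*m*(b * Real.cos β)) * e1 + (-2*m*(P/s)) * e2
      + (2*(b * Real.sin β)) * e3 + (2*(det3 A B u/s)) * e4
      + (2/s^2) * hGram + (2*R/s^2) * hs2 + (-2 : ℝ) * hRab
      + (-4*R*s⁻¹^2) * hs2 + (2*R*(s*s⁻¹+1)) * (mul_inv_cancel₀ hsne)
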